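/- arXiv:2005.10230 — 2 statements merged into one kernel-verified Lean document; each statement's English description precedes it below -/
import Mathlib

section
/- Let φ₁, φ₂ : ℝᵖ → ℝ ∪ {∞} be proper, lsc, convex, γ > 0, s ∈ ℝᵖ, u = prox_{γφ₁}(s), v = prox_{γφ₂}(2u−s). Define the Douglas–Rachford envelope φ^γ_DR(s) = φ₁(u) + φ₂(v) + (1/γ)⟨s−u, v−u⟩ + (1/(2γ))‖v−u‖². With γ* = 1/γ, s* = −s/γ, and φ^{γ*}_{DR*} the DRE of the dual problem ψ = (φ₁(−·))* + φ₂* with stepsize γ*, it holds that φ^{γ*}_{DR*}(s*) = −φ^γ_DR(s). -/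
open scoped RealInnerProductSpace
open Filter Topology

/-- The convex (Fenchel) conjugate of an extended-real-valued function. -/
noncomputable def eConj {n : ℕ} (h : EuclideanSpace ℝ (Fin n) → EReal)
    (y : EuclideanSpace ℝ (Fin n)) : EReal :=
  ⨆ x, ((⟪y, x⟫ : ℝ) : EReal) - h x

/-- `h` is proper: nowhere `⊥` and not identically `⊤`. -/
def ProperFn {n : ℕ} (h : EuclideanSpace ℝ (Fin n) → EReal) : Prop :=
  (∃ x, h x ≠ ⊤) ∧ ∀ x, h x ≠ ⊥

/-- Convexity for extended-real-valued functions. -/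
def EConvexOn {n : ℕ} (h : EuclideanSpace ℝ (Fin n) → EReal) : Prop :=
  ∀ x y : EuclideanSpace ℝ (Fin n), ∀ a b : ℝ, 0 ≤ a → 0 ≤ b → a + b = 1 →
    h (a • x + b • y) ≤ (a : EReal) * h x + (b : EReal) * h y

/-- `u ∈ prox_{γ h}(x)` for an extended-real-valued `h`. -/
def IsProx {n : ℕ} (h : EuclideanSpace ℝ (Fin n) → EReal) (γ : ℝ)
    (x u : EuclideanSpace ℝ (Fin n)) : Prop :=
  ∀ w, h u + ((‖u - x‖ ^ 2 / (2 * γ) : ℝ) : EReal) ≤ h w + ((‖w - x‖ ^ 2 / (2 * γ) : ℝ) : EReal)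

/-- `u = prox_{γ h}(x)` for a real-valued `h`. -/
def IsProxR {n : ℕ} (h : EuclideanSpace ℝ (Fin n) → ℝ) (γ : ℝ)
    (x u : EuclideanSpace ℝ (Fin n)) : Prop :=
  ∀ w, h u + ‖u - x‖ ^ 2 / (2 * γ) ≤ h w + ‖w - x‖ ^ 2 / (2 * γ)

/-- The Moreau envelope `h^γ`. -/
noncomputable def moreauEnv {n : ℕ} (h : EuclideanSpace ℝ (Fin n) → EReal) (γ : ℝ)
    (x : EuclideanSpace ℝ (Fin n)) : EReal :=
  ⨅ w, h w + ((‖w - x‖ ^ 2 / (2 * γ) : ℝ) : EReal)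

/-- The Douglas–Rachford envelope value at `s`, given the prox points `u, v`. -/
noncomputable def dre {n : ℕ} (φ₁ φ₂ : EuclideanSpace ℝ (Fin n) → EReal) (γ : ℝ)
    (s u v : EuclideanSpace ℝ (Fin n)) : EReal :=
  φ₁ u + φ₂ v + (((1 / γ) * ⟪s - u, v - u⟫ + ‖v - u‖ ^ 2 / (2 * γ) : ℝ) : EReal)

/-- `v` belongs to the regular (Fréchet) subdifferential of `h` at `x̄`. -/
def RegSubdiffAt {n : ℕ} (h : EuclideanSpace ℝ (Fin n) → EReal)
    (xbar v : EuclideanSpace ℝ (Fin n)) : Prop :=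
  ∀ ε : ℝ, 0 < ε → ∀ᶠ x in nhds xbar,
    h xbar + ((⟪v, x - xbar⟫ - ε * ‖x - xbar‖ : ℝ) : EReal) ≤ h x

/-- `μ`-strong convexity for extended-real-valued functions. -/
def EStrongConvexOn {n : ℕ} (μ : ℝ) (h : EuclideanSpace ℝ (Fin n) → EReal) : Prop :=
  EConvexOn (fun x => h x - ((μ / 2 * ‖x‖ ^ 2 : ℝ) : EReal))

lemma prox_finite {n : ℕ} {h : EuclideanSpace ℝ (Fin n) → EReal}
    (hp : ProperFn h) {γ : ℝ} {x u : EuclideanSpace ℝ (Fin n)}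
    (hu : IsProx h γ x u) : ∃ r : ℝ, h u = (r : EReal) := by
  obtain ⟨⟨x₀, hx₀⟩, hbot⟩ := hp
  refine ⟨(h u).toReal, (EReal.coe_toReal ?_ (hbot u)).symm⟩
  intro htop
  have h0 := hu x₀
  rw [htop] at h0
  have hx0 : h x₀ = ((h x₀).toReal : EReal) := (EReal.coe_toReal hx₀ (hbot x₀)).symm
  rw [hx0, ← EReal.coe_add] at h0
  simp at h0
  exact EReal.coe_ne_top _ h0

lemma prox_subgrad {n : ℕ} {h : EuclideanSpace ℝ (Fin n) → EReal}
    (hp : ProperFn h) (hc : EConvexOn h) {γ : ℝ} (hγ : 0 < γ)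
    {x u : EuclideanSpace ℝ (Fin n)} (hu : IsProx h γ x u)
    {a : ℝ} (ha : h u = (a : EReal)) (w : EuclideanSpace ℝ (Fin n)) :
    ((a + ⟪γ⁻¹ • (x - u), w - u⟫ : ℝ) : EReal) ≤ h w := by
  rcases eq_or_ne (h w) ⊤ with hw | hw
  · rw [hw]; exact le_top
  have hwr : h w = ((h w).toReal : EReal) := (EReal.coe_toReal hw (hp.2 w)).symm
  set hwv := (h w).toReal with hhwv
  rw [hwr, EReal.coe_le_coe_iff]
  have hinn : ⟪γ⁻¹ • (x - u), w - u⟫ = γ⁻¹ * ⟪x - u, w - u⟫ := real_inner_smul_left _ _ _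
  rw [hinn]
  have h2γ : (0:ℝ) < 2 * γ := by linarith
  have e1 : ∀ A B C : ℝ, (A + 2*(B) + C)/(2*γ) = A/(2*γ) + B/γ + C/(2*γ) := by
    intro A B C; field_simp
  have key : ∀ t : ℝ, 0 < t → t ≤ 1 →
      a ≤ hwv + γ⁻¹ * ⟪u - x, w - u⟫ + t * (‖w - u‖ ^ 2 / (2 * γ)) := by
    intro t ht ht1
    have hcv := hc u w (1 - t) t (by linarith) ht.le (by ring)
    have hpt : (1 - t) • u + t • w = u + t • (w - u) := by module
    rw [hpt, ha, hwr, ← EReal.coe_mul, ← EReal.coe_mul, ← EReal.coe_add] at hcv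
    have hpr := hu (u + t • (w - u))
    rw [ha] at hpr
    have hchain := hpr.trans (add_le_add_left hcv _)
    rw [← EReal.coe_add, ← EReal.coe_add, EReal.coe_le_coe_iff] at hchain
    have hnrm : ‖u + t • (w - u) - x‖ ^ 2
        = ‖u - x‖ ^ 2 + 2 * (t * ⟪u - x, w - u⟫) + t ^ 2 * ‖w - u‖ ^ 2 := by
      have hv : u + t • (w - u) - x = (u - x) + t • (w - u) := by module
      rw [hv, norm_add_sq_real, real_inner_smul_right, norm_smul]
      simp [mul_pow]
    rw [hnrm, e1] at hchain
    have hta : t * a ≤ t * (hwv + γ⁻¹ * ⟪u - x, w - u⟫ + t * (‖w - u‖ ^ 2 / (2 * γ))) := by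
      have e2 : t * ⟪u - x, w - u⟫ / γ = t * (γ⁻¹ * ⟪u - x, w - u⟫) := by
        rw [div_eq_mul_inv]; ring
      have e3 : t ^ 2 * ‖w - u‖ ^ 2 / (2*γ) = t * (t * (‖w - u‖ ^ 2 / (2 * γ))) := by
        rw [pow_two]; ring
      rw [e2, e3] at hchain
      nlinarith [hchain]
    exact le_of_mul_le_mul_left hta ht
  have hmain : a ≤ hwv + γ⁻¹ * ⟪u - x, w - u⟫ := by
    apply le_of_forall_pos_le_add
    intro ε hε
    rcases le_or_gt (‖w - u‖ ^ 2 / (2 * γ)) 0 with hC | hC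
    · have := key 1 one_pos le_rfl
      nlinarith
    · set t := min 1 (ε / (‖w - u‖ ^ 2 / (2 * γ))) with htd
      have ht : 0 < t := lt_min one_pos (div_pos hε hC)
      have hk := key t ht (min_le_left _ _)
      have htC : t * (‖w - u‖ ^ 2 / (2 * γ)) ≤ ε := by
        calc t * (‖w - u‖ ^ 2 / (2 * γ))
            ≤ (ε / (‖w - u‖ ^ 2 / (2 * γ))) * (‖w - u‖ ^ 2 / (2 * γ)) :=
              mul_le_mul_of_nonneg_right (min_le_right _ _) hC.le
          _ = ε := div_mul_cancel₀ ε hC.ne'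
      linarith
  have hneg : ⟪x - u, w - u⟫ = -⟪u - x, w - u⟫ := by
    rw [← inner_neg_left]; congr 1; abel
  rw [hneg, mul_neg]; linarith

lemma eConj_eq_of_subgrad {n : ℕ} {h : EuclideanSpace ℝ (Fin n) → EReal}
    {u z : EuclideanSpace ℝ (Fin n)} {a : ℝ} (ha : h u = (a : EReal))
    (hsub : ∀ w, ((a + ⟪z, w - u⟫ : ℝ) : EReal) ≤ h w) :
    eConj h z = ((⟪z, u⟫ - a : ℝ) : EReal) := by
  apply le_antisymm
  · apply iSup_le
    intro x
    calc ((⟪z, x⟫ : ℝ) : EReal) - h x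
        ≤ ((⟪z, x⟫ : ℝ) : EReal) - ((a + ⟪z, x - u⟫ : ℝ) : EReal) :=
          EReal.sub_le_sub le_rfl (hsub x)
      _ = ((⟪z, u⟫ - a : ℝ) : EReal) := by
          rw [← EReal.coe_sub, EReal.coe_eq_coe_iff, inner_sub_right]
          ring
  · have := le_iSup (fun x => ((⟪z, x⟫ : ℝ) : EReal) - h x) u
    rw [ha, ← EReal.coe_sub] at this
    exact this

lemma eConj_lower {n : ℕ} {h : EuclideanSpace ℝ (Fin n) → EReal}
    {p : EuclideanSpace ℝ (Fin n)} {a : ℝ} (ha : h p = (a : EReal))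
    (w : EuclideanSpace ℝ (Fin n)) :
    ((⟪w, p⟫ - a : ℝ) : EReal) ≤ eConj h w := by
  have := le_iSup (fun x => ((⟪w, x⟫ : ℝ) : EReal) - h x) p
  rw [ha, ← EReal.coe_sub] at this
  exact this

lemma isProx_conj_of {n : ℕ} {h : EuclideanSpace ℝ (Fin n) → EReal}
    {p c χ : EuclideanSpace ℝ (Fin n)} {a : ℝ} {lam : ℝ} (hlam : 0 < lam)
    (hhp : h p = (a : EReal))
    (hsub : ∀ w, ((a + ⟪c, w - p⟫ : ℝ) : EReal) ≤ h w)
    (hc : c = χ - lam • p) :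
    IsProx (eConj h) lam χ c := by
  intro w
  rw [eConj_eq_of_subgrad hhp hsub, ← EReal.coe_add]
  calc ((⟪c, p⟫ - a + ‖c - χ‖ ^ 2 / (2 * lam) : ℝ) : EReal)
      ≤ ((⟪w, p⟫ - a + ‖w - χ‖ ^ 2 / (2 * lam) : ℝ) : EReal) := by
        rw [EReal.coe_le_coe_iff]
        have hcχ : c - χ = -(lam • p) := by rw [hc]; abel
        have hwχ : w - χ = (w - c) + (c - χ) := by abel
        have h1 : ‖c - χ‖ ^ 2 = lam ^ 2 * ‖p‖ ^ 2 := by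
          rw [hcχ, norm_neg, norm_smul]; simp [mul_pow, sq_abs]
        have h2 : ‖w - χ‖ ^ 2 = ‖w - c‖ ^ 2 - 2 * (lam * ⟪w - c, p⟫) + lam ^ 2 * ‖p‖ ^ 2 := by
          rw [hwχ, norm_add_sq_real, hcχ, inner_neg_right, real_inner_smul_right,
            norm_neg, norm_smul]
          simp [mul_pow, sq_abs]
          ring
        have h3 : ⟪w, p⟫ - ⟪c, p⟫ = ⟪w - c, p⟫ := (inner_sub_left _ _ _).symm
        have h4 : 0 ≤ ‖w - c‖ ^ 2 := sq_nonneg _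
        rw [h1, h2]
        have h6 : ∀ X I Y : ℝ, (X - 2 * (lam * I) + Y) / (2 * lam)
            = X / (2 * lam) - I + Y / (2 * lam) := by
          intro X I Y; field_simp
        rw [h6]
        have := div_nonneg h4 (by linarith : (0:ℝ) ≤ 2 * lam)
        linarith [h3]
    _ ≤ eConj h w + ((‖w - χ‖ ^ 2 / (2 * lam) : ℝ) : EReal) := by
        rw [EReal.coe_add]
        exact add_le_add_left (eConj_lower hhp w) _

lemma eConj_ne_bot {n : ℕ} {h : EuclideanSpace ℝ (Fin n) → EReal}
    (hp : ProperFn h) (y : EuclideanSpace ℝ (Fin n)) : eConj h y ≠ ⊥ := by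
  obtain ⟨⟨x₀, hx₀⟩, hbot⟩ := hp
  have hx0 : h x₀ = ((h x₀).toReal : EReal) := (EReal.coe_toReal hx₀ (hbot x₀)).symm
  have := eConj_lower hx0 y
  exact fun hb => by rw [hb, le_bot_iff] at this; exact EReal.coe_ne_bot _ this

lemma prox_conj_unique {n : ℕ} {h : EuclideanSpace ℝ (Fin n) → EReal}
    (hp : ProperFn h) {lam : ℝ} (hlam : 0 < lam)
    {x a b : EuclideanSpace ℝ (Fin n)}
    (hA : IsProx (eConj h) lam x a) (hB : IsProx (eConj h) lam x b)
    {rb : ℝ} (hrb : eConj h b = (rb : EReal)) : a = b := by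
  have h2l : (0:ℝ) < 2 * lam := by linarith
  -- g a is finite
  have hAb := hA b
  rw [hrb, ← EReal.coe_add] at hAb
  have hga_top : eConj h a ≠ ⊤ := by
    intro htop
    rw [htop] at hAb
    simp at hAb
    exact EReal.coe_ne_top _ hAb
  have hra : eConj h a = (((eConj h a).toReal : ℝ) : EReal) :=
    (EReal.coe_toReal hga_top (eConj_ne_bot hp a)).symm
  set ra := (eConj h a).toReal with hradef
  rw [hra, ← EReal.coe_add, EReal.coe_le_coe_iff] at hAb
  have hBa := hB a
  rw [hrb, hra, ← EReal.coe_add, ← EReal.coe_add, EReal.coe_le_coe_iff] at hBa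
  -- midpoint
  set m := (2:ℝ)⁻¹ • (a + b) with hm
  have hgm_le : eConj h m ≤ (((ra + rb) / 2 : ℝ) : EReal) := by
    apply iSup_le
    intro z
    rcases eq_or_ne (h z) ⊤ with hz | hz
    · rw [hz]; simp
    · have hzr : h z = ((h z).toReal : EReal) := (EReal.coe_toReal hz (hp.2 z)).symm
      set hzv := (h z).toReal with hzvdef
      have t1 : ((⟪a, z⟫ : ℝ) : EReal) - h z ≤ eConj h a :=
        le_iSup (fun y => ((⟪a, y⟫ : ℝ) : EReal) - h y) z
      rw [hzr, ← EReal.coe_sub, hra, EReal.coe_le_coe_iff] at t1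
      have t2 : ((⟪b, z⟫ : ℝ) : EReal) - h z ≤ eConj h b :=
        le_iSup (fun y => ((⟪b, y⟫ : ℝ) : EReal) - h y) z
      rw [hzr, ← EReal.coe_sub, hrb, EReal.coe_le_coe_iff] at t2
      rw [hzr, ← EReal.coe_sub, EReal.coe_le_coe_iff]
      have hmz : ⟪m, z⟫ = 2⁻¹ * (⟪a, z⟫ + ⟪b, z⟫) := by
        rw [hm, real_inner_smul_left, inner_add_left]
      rw [hmz]; linarith
  have hgm_top : eConj h m ≠ ⊤ := by
    intro ht
    rw [ht, top_le_iff] at hgm_le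
    exact EReal.coe_ne_top _ hgm_le
  have hrm : eConj h m = (((eConj h m).toReal : ℝ) : EReal) :=
    (EReal.coe_toReal hgm_top (eConj_ne_bot hp m)).symm
  set rm := (eConj h m).toReal with hrmdef
  rw [hrm, EReal.coe_le_coe_iff] at hgm_le
  have hAm := hA m
  rw [hra, hrm, ← EReal.coe_add, ← EReal.coe_add, EReal.coe_le_coe_iff] at hAm
  -- norm identities
  have hmx : m - x = (2:ℝ)⁻¹ • ((a - x) + (b - x)) := by rw [hm]; module
  have hnm : ‖m - x‖ ^ 2 = (‖a - x‖ ^ 2 + 2 * ⟪a - x, b - x⟫ + ‖b - x‖ ^ 2) / 4 := by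
    have h14 : ‖(2:ℝ)⁻¹‖ ^ 2 = 4⁻¹ := by norm_num
    rw [hmx, norm_smul, mul_pow, norm_add_sq_real, h14]
    ring
  have habx : a - b = (a - x) - (b - x) := by abel
  have hab : ‖a - b‖ ^ 2 = ‖a - x‖ ^ 2 - 2 * ⟪a - x, b - x⟫ + ‖b - x‖ ^ 2 := by
    rw [habx, norm_sub_sq_real]
  -- clear denominators
  have expand : ∀ r X : ℝ, (r + X / (2 * lam)) * (2 * lam) = r * (2 * lam) + X := by
    intro r X; field_simp
  have H1 := mul_le_mul_of_nonneg_right hAm h2l.le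
  rw [expand, expand] at H1
  have H2 := mul_le_mul_of_nonneg_right hAb h2l.le
  rw [expand, expand] at H2
  have H3 := mul_le_mul_of_nonneg_right hBa h2l.le
  rw [expand, expand] at H3
  have hle : ‖a - b‖ ^ 2 ≤ 0 := by nlinarith [hgm_le, hnm, hab, H1, H2, H3]
  have h0 : ‖a - b‖ ^ 2 = 0 := le_antisymm hle (sq_nonneg _)
  exact sub_eq_zero.mp (norm_eq_zero.mp (sq_eq_zero_iff.mp h0))

/-- The dual DRE is the negative of the primal DRE: `φ^{γ*}_{DR*}(s*) = −φ^γ_DR(s)`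
with `γ* = 1/γ`, `s* = −s/γ`. -/
theorem dre_self_dual {n : ℕ} (φ₁ φ₂ : EuclideanSpace ℝ (Fin n) → EReal)
    (h1p : ProperFn φ₁) (h1l : LowerSemicontinuous φ₁) (h1c : EConvexOn φ₁)
    (h2p : ProperFn φ₂) (h2l : LowerSemicontinuous φ₂) (h2c : EConvexOn φ₂)
    (γ : ℝ) (hγ : 0 < γ) (s u v ustar vstar : EuclideanSpace ℝ (Fin n))
    (hu : IsProx φ₁ γ s u) (hv : IsProx φ₂ γ ((2 : ℝ) • u - s) v)
    (hustar : IsProx (eConj (fun x => φ₁ (-x))) (1 / γ) (-(γ⁻¹ • s)) ustar)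
    (hvstar : IsProx (eConj φ₂) (1 / γ) ((2 : ℝ) • ustar - -(γ⁻¹ • s)) vstar) :
    dre (eConj (fun x => φ₁ (-x))) (eConj φ₂) (1 / γ) (-(γ⁻¹ • s)) ustar vstar =
      -dre φ₁ φ₂ γ s u v := by
  have hlm : (0:ℝ) < 1 / γ := by positivity
  obtain ⟨a, ha⟩ := prox_finite h1p hu
  obtain ⟨b, hb⟩ := prox_finite h2p hv
  set c₁ : EuclideanSpace ℝ (Fin n) := γ⁻¹ • (u - s) with hc₁
  set c₂ : EuclideanSpace ℝ (Fin n) := γ⁻¹ • ((2:ℝ) • u - s - v) with hc₂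
  have hsub1 := prox_subgrad h1p h1c hγ hu ha
  have hsub2' := prox_subgrad h2p h2c hγ hv hb
  have hsub2 : ∀ w, ((b + ⟪c₂, w - v⟫ : ℝ) : EReal) ≤ φ₂ w := by
    intro w
    have := hsub2' w
    have e : γ⁻¹ • ((2:ℝ) • u - s - v) = c₂ := hc₂.symm
    rwa [e] at this
  -- facts about the reflected function
  have hat : (fun x => φ₁ (-x)) (-u) = (a : EReal) := by simpa using ha
  have hsubt : ∀ w, ((a + ⟪c₁, w - -u⟫ : ℝ) : EReal) ≤ (fun x => φ₁ (-x)) w := by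
    intro w
    have h1 := hsub1 (-w)
    have e : ⟪γ⁻¹ • (s - u), -w - u⟫ = ⟪c₁, w - -u⟫ := by
      calc ⟪γ⁻¹ • (s - u), -w - u⟫ = ⟪-(γ⁻¹ • (s - u)), -(-w - u)⟫ := (inner_neg_neg _ _).symm
        _ = ⟪c₁, w - -u⟫ := by rw [hc₁]; congr 1 <;> module
    rw [e] at h1
    exact h1
  have hφtp : ProperFn (fun x => φ₁ (-x)) := by
    obtain ⟨⟨x₀, hx₀⟩, hbot⟩ := h1p
    exact ⟨⟨-x₀, by simpa using hx₀⟩, fun x => hbot (-x)⟩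
  have hg1 : eConj (fun x => φ₁ (-x)) c₁ = ((⟪c₁, -u⟫ - a : ℝ) : EReal) :=
    eConj_eq_of_subgrad hat hsubt
  have hprox1 : IsProx (eConj (fun x => φ₁ (-x))) (1/γ) (-(γ⁻¹ • s)) c₁ :=
    isProx_conj_of hlm hat hsubt (by rw [hc₁, one_div]; module)
  have hust : ustar = c₁ := prox_conj_unique hφtp hlm hustar hprox1 hg1
  have hg2 : eConj φ₂ c₂ = ((⟪c₂, v⟫ - b : ℝ) : EReal) := eConj_eq_of_subgrad hb hsub2
  have hprox2 : IsProx (eConj φ₂) (1/γ) ((2:ℝ) • ustar - -(γ⁻¹ • s)) c₂ := by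
    rw [hust]
    exact isProx_conj_of hlm hb hsub2 (by rw [hc₁, hc₂, one_div]; module)
  have hvst : vstar = c₂ := prox_conj_unique h2p hlm hvstar hprox2 hg2
  -- final computation
  rw [dre, dre, hust, hvst, hg1, hg2, ha, hb,
    ← EReal.coe_add, ← EReal.coe_add, ← EReal.coe_add, ← EReal.coe_add,
    ← EReal.coe_neg, EReal.coe_eq_coe_iff]
  have v1 : -(γ⁻¹ • s) - c₁ = γ⁻¹ • (-u) := by rw [hc₁]; module
  have v2 : c₂ - c₁ = γ⁻¹ • (u - v) := by rw [hc₁, hc₂]; module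
  rw [v1, v2]
  have hγ' : (0:ℝ) < γ⁻¹ := by positivity
  have hn : ‖γ⁻¹ • (u - v)‖ ^ 2 = γ⁻¹ ^ 2 * ⟪u - v, u - v⟫ := by
    rw [norm_smul, mul_pow, real_inner_self_eq_norm_sq, Real.norm_eq_abs, sq_abs]
  have hn2 : ‖v - u‖ ^ 2 = ⟪u - v, u - v⟫ := by
    rw [norm_sub_rev, real_inner_self_eq_norm_sq]
  rw [hn, hn2, hc₁, hc₂]
  rw [one_div_one_div]
  simp only [inner_sub_left, inner_sub_right, inner_add_left, inner_add_right,
    inner_neg_left, inner_neg_right, real_inner_smul_left, real_inner_smul_right,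
    inner_smul_left, inner_smul_right, real_inner_comm u s, real_inner_comm v s,
    real_inner_comm v u, conj_trivial]
  have hγne : γ ≠ 0 := hγ.ne'
  field_simp
  ring
end

section
/- Let φ₁ : ℝᵖ → ℝ be differentiable with L-Lipschitz gradient, φ₂ : ℝᵖ → ℝ ∪ {∞} proper lsc, 0 < γ < 1/L, and φ = φ₁ + φ₂. Then for all s, ū ∈ ℝᵖ it holds that φ^γ_DR(s) − φ(ū) ≤ ((1+γL)/(2γ)) ‖prox_{γφ₁}(s) − ū‖². -/
open scoped RealInnerProductSpace
open Filter Topology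

lemma descent_lemma {n : ℕ} (φ₁ : EuclideanSpace ℝ (Fin n) → ℝ)
    (f' : EuclideanSpace ℝ (Fin n) → EuclideanSpace ℝ (Fin n)) (L : ℝ) (hL : 0 ≤ L)
    (hdiff : ∀ x, HasGradientAt φ₁ (f' x) x)
    (hlip : ∀ x y, ‖f' x - f' y‖ ≤ L * ‖x - y‖)
    (x y : EuclideanSpace ℝ (Fin n)) :
    φ₁ x + ⟪f' x, y - x⟫ - L / 2 * ‖y - x‖ ^ 2 ≤ φ₁ y := by
  set d := y - x with hd
  have hc : ∀ t : ℝ, HasDerivAt (fun t : ℝ => φ₁ (x + t • d)) ⟪f' (x + t • d), d⟫ t := by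
    intro t
    have h1 : HasDerivAt (fun t : ℝ => x + t • d) d t := by
      simpa using ((hasDerivAt_id t).smul_const d).const_add x
    have h2 := (hdiff (x + t • d)).hasFDerivAt.comp_hasDerivAt t h1
    simp at h2
    exact h2
  have hfc : Continuous f' := by
    have : LipschitzWith (Real.toNNReal L) f' := by
      apply LipschitzWith.of_dist_le_mul
      intro a b
      rw [dist_eq_norm, dist_eq_norm]
      exact le_trans (hlip a b) (by rw [Real.coe_toNNReal L hL])
    exact this.continuous
  have hcont : Continuous fun t : ℝ => ⟪f' (x + t • d), d⟫ := by
    exact (Continuous.inner (hfc.comp (by fun_prop)) continuous_const)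
  have key : φ₁ y - φ₁ x = ∫ t in (0:ℝ)..1, ⟪f' (x + t • d), d⟫ := by
    have h := intervalIntegral.integral_eq_sub_of_hasDerivAt (f := fun t : ℝ => φ₁ (x + t • d))
      (fun t _ => hc t) (hcont.intervalIntegrable 0 1)
    have e1 : x + (1:ℝ) • d = y := by rw [hd]; module
    have e0 : x + (0:ℝ) • d = x := by simp
    rw [e1, e0] at h
    linarith [h]
  have hbound : ∀ t ∈ Set.Icc (0:ℝ) 1, ⟪f' x, d⟫ - L * t * ‖d‖ ^ 2 ≤ ⟪f' (x + t • d), d⟫ := by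
    intro t ht
    have h1 : |⟪f' (x + t • d) - f' x, d⟫| ≤ L * t * ‖d‖ ^ 2 := by
      calc |⟪f' (x + t • d) - f' x, d⟫| ≤ ‖f' (x + t • d) - f' x‖ * ‖d‖ :=
            abs_real_inner_le_norm _ _
        _ ≤ (L * ‖(x + t • d) - x‖) * ‖d‖ := by
            have := hlip (x + t • d) x
            gcongr
        _ = L * t * ‖d‖ ^ 2 := by
            have : ‖(x + t • d) - x‖ = t * ‖d‖ := by
              simp [norm_smul, abs_of_nonneg ht.1]
            rw [this]; ring
    have h2 : ⟪f' (x + t • d), d⟫ = ⟪f' x, d⟫ + ⟪f' (x + t • d) - f' x, d⟫ := by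
      rw [inner_sub_left]; ring
    have h3 := neg_abs_le ⟪f' (x + t • d) - f' x, d⟫
    linarith
  have hint : ∫ t in (0:ℝ)..1, (⟪f' x, d⟫ - L * t * ‖d‖ ^ 2) ≤
      ∫ t in (0:ℝ)..1, ⟪f' (x + t • d), d⟫ := by
    apply intervalIntegral.integral_mono_on (by norm_num)
    · exact Continuous.intervalIntegrable (by fun_prop) 0 1
    · exact hcont.intervalIntegrable 0 1
    · exact hbound
  have hval : ∫ t in (0:ℝ)..1, (⟪f' x, d⟫ - L * t * ‖d‖ ^ 2) = ⟪f' x, d⟫ - L / 2 * ‖d‖ ^ 2 := by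
    have : (fun t : ℝ => ⟪f' x, d⟫ - L * t * ‖d‖ ^ 2)
        = fun t : ℝ => ⟪f' x, d⟫ - (L * ‖d‖ ^ 2) * t := by funext t; ring
    rw [this, intervalIntegral.integral_sub intervalIntegrable_const
      (Continuous.intervalIntegrable (by fun_prop) 0 1),
      intervalIntegral.integral_const_mul, integral_id]
    simp
    ring
  rw [hval] at hint
  linarith [key ▸ hint]

lemma prox_grad_eq {n : ℕ} (φ₁ : EuclideanSpace ℝ (Fin n) → ℝ)
    (f' : EuclideanSpace ℝ (Fin n) → EuclideanSpace ℝ (Fin n))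
    (hdiff : ∀ x, HasGradientAt φ₁ (f' x) x)
    (γ : ℝ) (hγ0 : 0 < γ) (s u : EuclideanSpace ℝ (Fin n))
    (hu : IsProxR φ₁ γ s u) : s - u = γ • f' u := by
  have hγ : γ ≠ 0 := ne_of_gt hγ0
  set g := fun w : EuclideanSpace ℝ (Fin n) => φ₁ w + ‖w - s‖ ^ 2 / (2 * γ) with hg
  have hmin : IsLocalMin g u := Filter.Eventually.of_forall hu
  have hsq : HasFDerivAt (fun w : EuclideanSpace ℝ (Fin n) => ‖w - s‖ ^ 2)
      (2 • innerSL ℝ (u - s)) u := by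
    have := ((hasFDerivAt_id u).sub_const s).norm_sq
    simpa using this
  have hder : HasFDerivAt g
      ((InnerProductSpace.toDual ℝ _ (f' u)) + (2 * γ)⁻¹ • (2 • innerSL ℝ (u - s))) u := by
    have h1 := (hdiff u).hasFDerivAt
    have h2 : HasFDerivAt (fun w : EuclideanSpace ℝ (Fin n) => ‖w - s‖ ^ 2 / (2 * γ))
        ((2 * γ)⁻¹ • (2 • innerSL ℝ (u - s))) u := by
      simpa [div_eq_inv_mul] using hsq.const_mul ((2 * γ)⁻¹)
    have := h1.add h2
    exact this
  have hzero := hmin.hasFDerivAt_eq_zero hder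
  have hvec : f' u + γ⁻¹ • (u - s) = 0 := by
    have hy : ∀ y, ⟪f' u + γ⁻¹ • (u - s), y⟫ = 0 := by
      intro y
      have := congrFun (congrArg DFunLike.coe hzero) y
      simp only [ContinuousLinearMap.add_apply, ContinuousLinearMap.smul_apply,
        ContinuousLinearMap.zero_apply, InnerProductSpace.toDual_apply_apply, innerSL_apply_apply,
        smul_eq_mul, two_smul, ContinuousLinearMap.coe_smul', Pi.smul_apply] at this
      rw [inner_add_left, inner_smul_left]
      simp only [RCLike.conj_to_real] at *
      have hγ2 : (2 * γ)⁻¹ * (⟪u - s, y⟫ + ⟪u - s, y⟫) = γ⁻¹ * ⟪u - s, y⟫ := by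
        field_simp; ring
      linarith [this, hγ2]
    have := hy (f' u + γ⁻¹ • (u - s))
    exact inner_self_eq_zero.mp this
  have : γ • (f' u + γ⁻¹ • (u - s)) = 0 := by rw [hvec, smul_zero]
  rw [smul_add, smul_smul, mul_inv_cancel₀ hγ, one_smul] at this
  have : γ • f' u = s - u := by
    have h' := this
    have : γ • f' u = -(u - s) := by linear_combination (norm := module) h'
    rw [this]; module
  exact this.symm

/-- Upper quadratic bound: `φ^γ_DR(s) − φ(ū) ≤ ((1+γL)/(2γ))‖prox_{γφ₁}(s) − ū‖²`. -/
theorem dre_upper_quadratic {n : ℕ} (φ₁ : EuclideanSpace ℝ (Fin n) → ℝ)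
    (f' : EuclideanSpace ℝ (Fin n) → EuclideanSpace ℝ (Fin n)) (L : ℝ) (hL : 0 < L)
    (hdiff : ∀ x, HasGradientAt φ₁ (f' x) x)
    (hlip : ∀ x y, ‖f' x - f' y‖ ≤ L * ‖x - y‖)
    (φ₂ : EuclideanSpace ℝ (Fin n) → EReal)
    (h2p : ProperFn φ₂) (h2l : LowerSemicontinuous φ₂)
    (γ : ℝ) (hγ0 : 0 < γ) (hγ : γ < 1 / L)
    (s ubar u v : EuclideanSpace ℝ (Fin n))
    (hu : IsProxR φ₁ γ s u) (hv : IsProx φ₂ γ ((2 : ℝ) • u - s) v) :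
    dre (fun x => ((φ₁ x : ℝ) : EReal)) φ₂ γ s u v - (((φ₁ ubar : ℝ) : EReal) + φ₂ ubar)
      ≤ (((1 + γ * L) / (2 * γ) * ‖u - ubar‖ ^ 2 : ℝ) : EReal) := by
  by_cases htop : φ₂ ubar = ⊤
  · rw [htop, EReal.coe_add_top, EReal.sub_top]
    exact bot_le
  · have hbot := h2p.2 ubar
    have hb : φ₂ ubar = ((φ₂ ubar).toReal : EReal) := (EReal.coe_toReal htop hbot).symm
    set b := (φ₂ ubar).toReal with hbdef
    have hvu := hv ubar
    rw [hb] at hvu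
    have hvt : φ₂ v ≠ ⊤ := by
      intro h
      rw [h, EReal.top_add_coe, top_le_iff, ← EReal.coe_add] at hvu
      exact EReal.coe_ne_top _ hvu
    have ha : φ₂ v = ((φ₂ v).toReal : EReal) := (EReal.coe_toReal hvt (h2p.2 v)).symm
    set a := (φ₂ v).toReal with hadef
    rw [ha] at hvu
    rw [← EReal.coe_add, ← EReal.coe_add, EReal.coe_le_coe_iff] at hvu
    have hgrad : s - u = γ • f' u := prox_grad_eq φ₁ f' hdiff γ hγ0 s u hu
    have hdesc := descent_lemma φ₁ f' L hL.le hdiff hlip u ubar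
    -- reduce to a real inequality
    rw [dre, ha, hb, ← EReal.coe_add, ← EReal.coe_add, ← EReal.coe_add, ← EReal.coe_sub,
      EReal.coe_le_coe_iff]
    -- algebraic identities
    have e1 : ‖v - ((2:ℝ) • u - s)‖ ^ 2 = ‖v - u‖ ^ 2 + 2 * ⟪v - u, s - u⟫ + ‖s - u‖ ^ 2 := by
      have hx : v - ((2:ℝ) • u - s) = (v - u) + (s - u) := by module
      rw [hx, norm_add_sq_real]
    have e2 : ‖ubar - ((2:ℝ) • u - s)‖ ^ 2
        = ‖ubar - u‖ ^ 2 + 2 * (γ * ⟪f' u, ubar - u⟫) + ‖s - u‖ ^ 2 := by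
      have hx : ubar - ((2:ℝ) • u - s) = (ubar - u) + (s - u) := by module
      rw [hx, norm_add_sq_real, hgrad, real_inner_smul_right, real_inner_comm]
    have e4 : ⟪s - u, v - u⟫ = ⟪v - u, s - u⟫ := real_inner_comm _ _
    have e5 : ‖u - ubar‖ = ‖ubar - u‖ := norm_sub_rev _ _
    rw [e4, e5]
    have hγ' : γ ≠ 0 := ne_of_gt hγ0
    have hsum : (1 + γ * L) / (2 * γ) * ‖ubar - u‖ ^ 2
        = L / 2 * ‖ubar - u‖ ^ 2 + ‖ubar - u‖ ^ 2 / (2 * γ) := by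
      field_simp
      ring
    rw [hsum]
    have hkey : (1 / γ) * ⟪v - u, s - u⟫ + ‖v - u‖ ^ 2 / (2 * γ)
        + (‖ubar - ((2:ℝ) • u - s)‖ ^ 2 - ‖v - ((2:ℝ) • u - s)‖ ^ 2) / (2 * γ)
        = ⟪f' u, ubar - u⟫ + ‖ubar - u‖ ^ 2 / (2 * γ) := by
      rw [e1, e2]
      field_simp
      ring
    have hab : a - b ≤ (‖ubar - ((2:ℝ) • u - s)‖ ^ 2 - ‖v - ((2:ℝ) • u - s)‖ ^ 2) / (2 * γ) := by
      have hs := sub_div (‖ubar - ((2:ℝ) • u - s)‖ ^ 2) (‖v - ((2:ℝ) • u - s)‖ ^ 2) (2 * γ)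
      linarith
    linarith
end
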